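/- arXiv:2110.04606 — 2 statements merged into one kernel-verified Lean document; each statement's English description precedes it below -/
import Mathlib

section
/- Let G be a connected finite simple graph and let B be a set of edges of G such that (i) every cycle of G contains an even number of edges from B, and (ii) every 3-clique of G contains at least one edge belonging to B. Then G admits a 2-coloring of its vertices with no monochromatic triangle, i.e., there exists c : V → ZMod 2 such that no 3-clique of G has all three vertices of the same color. -/
section aux

variable {V : Type*} [DecidableEq V] {G : SimpleGraph V} (B : Finset (Sym2 V))

/-- count of B-edges on a walk -/
private def bcnt {u v : V} (w : G.Walk u v) : ℕ :=
  w.edges.countP (fun e => decide (e ∈ B))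

private lemma bcnt_nil {v : V} : bcnt B (SimpleGraph.Walk.nil : G.Walk v v) = 0 := rfl

private lemma bcnt_cons {u v x : V} (h : G.Adj u x) (w : G.Walk x v) :
    bcnt B (SimpleGraph.Walk.cons h w) =
      (if s(u, x) ∈ B then 1 else 0) + bcnt B w := by
  simp [bcnt, List.countP_cons]
  by_cases hb : s(u, x) ∈ B <;> simp [hb] <;> omega

private lemma bcnt_append {u v x : V} (p : G.Walk u x) (q : G.Walk x v) :
    bcnt B (p.append q) = bcnt B p + bcnt B q := by
  simp [bcnt, SimpleGraph.Walk.edges_append, List.countP_append]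

private lemma bcnt_reverse {u v : V} (p : G.Walk u v) :
    bcnt B p.reverse = bcnt B p := by
  simp [bcnt, SimpleGraph.Walk.edges_reverse]

/-- a path from u to v containing the edge s(u,v) has length 1 -/
private lemma path_edge_mem {u v : V} (q : G.Walk u v) (hp : q.IsPath)
    (he : s(u, v) ∈ q.edges) : q.edges = [s(u, v)] := by
  cases q with
  | nil => simp at he
  | cons h' q' =>
    rename_i x
    rw [SimpleGraph.Walk.cons_isPath_iff] at hp
    rw [SimpleGraph.Walk.edges_cons] at he ⊢
    rcases List.mem_cons.mp he with he1 | he2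
    · -- s(u,v) = s(u,x), so x = v
      have hxv : x = v := by
        rw [Sym2.eq_iff] at he1
        rcases he1 with ⟨_, h2⟩ | ⟨h1, h2⟩
        · exact h2.symm
        · subst h1; exact h2.symm
      subst hxv
      have : q' = SimpleGraph.Walk.nil :=
        (SimpleGraph.Walk.isPath_iff_eq_nil).mp hp.1
      subst this
      simp [Sym2.eq_swap]
    · exact absurd (q'.fst_mem_support_of_mem_edges he2) hp.2

/-- every closed walk has an even number of B-edges -/
private lemma even_bcnt_closed
    (hcyc : ∀ (v : V) (w : G.Walk v v), w.IsCycle →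
      Even (w.edges.countP (fun e => decide (e ∈ B)))) :
    ∀ (n : ℕ) (v : V) (w : G.Walk v v), w.length = n → Even (bcnt B w) := by
  intro n
  induction n using Nat.strong_induction_on with
  | _ n ih =>
    intro v w hl
    cases w with
    | nil => simp [bcnt_nil]
    | cons h q =>
      rename_i u
      by_cases hq : q.support.Nodup
      · have hp : q.IsPath := (SimpleGraph.Walk.isPath_def q).mpr hq
        by_cases he : s(v, u) ∈ q.edges
        · -- degenerate: q is the single edge back
          have hq1 : q.edges = [s(u, v)] := by
            have : s(u, v) ∈ q.edges := by rwa [Sym2.eq_swap] at he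
            exact path_edge_mem q hp this
          rw [bcnt_cons]
          unfold bcnt
          rw [hq1]
          by_cases hb : s(v, u) ∈ B
          · have hb' : s(u, v) ∈ B := by rwa [Sym2.eq_swap] at hb
            simp [hb, hb']
          · have hb' : s(u, v) ∉ B := by rwa [Sym2.eq_swap] at hb
            simp [hb, hb']
        · -- genuine cycle
          have hc : (SimpleGraph.Walk.cons h q).IsCycle :=
            (SimpleGraph.Walk.cons_isCycle_iff q h).mpr ⟨hp, he⟩
          exact hcyc v _ hc
      · -- q has a repeated vertex x; split off a shorter closed walk at x
        obtain ⟨x, hdup⟩ := List.exists_duplicate_iff_not_nodup.mpr hq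
        have hx : x ∈ q.support := hdup.mem
        have hcount : 2 ≤ q.support.count x :=
          List.duplicate_iff_two_le_count.mp hdup
        set r1 := q.takeUntil x hx with hr1
        set r2 := q.dropUntil x hx with hr2
        have hspec : r1.append r2 = q := q.take_spec hx
        have hcount1 : r1.support.count x = 1 :=
          q.count_support_takeUntil_eq_one hx
        have hsupp : q.support = r1.support ++ r2.support.tail := by
          rw [← hspec, SimpleGraph.Walk.support_append]
        have hx2 : x ∈ r2.support.tail := by
          by_contra hxn
          have : q.support.count x = r1.support.count x := by
            simp [hsupp, List.count_append, List.count_eq_zero_of_not_mem hxn]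
          omega
        have hnn : ¬ r2.Nil := by
          intro hn
          rw [SimpleGraph.Walk.nil_iff_support_eq.mp hn] at hx2
          simp at hx2
        obtain ⟨y, h2, r3, hr3⟩ := SimpleGraph.Walk.not_nil_iff.mp hnn
        rw [hr3] at hx2 hspec
        rw [SimpleGraph.Walk.support_cons, List.tail_cons] at hx2
        set t := r3.takeUntil x hx2 with ht
        set d := r3.dropUntil x hx2 with hd
        have hspec3 : t.append d = r3 := r3.take_spec hx2
        -- the two shorter closed walks
        have hloop : Even (bcnt B (SimpleGraph.Walk.cons h2 t)) := by
          apply ih (SimpleGraph.Walk.cons h2 t).length _ x _ rfl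
          have l1 : r1.length + (SimpleGraph.Walk.cons h2 r3).length = q.length := by
            rw [← hspec]; rw [SimpleGraph.Walk.length_append]
          have l3 : t.length + d.length = r3.length := by
            rw [← hspec3]; rw [SimpleGraph.Walk.length_append]
          simp only [SimpleGraph.Walk.length_cons] at *
          omega
        have hrest : Even (bcnt B (SimpleGraph.Walk.cons h (r1.append d))) := by
          apply ih (SimpleGraph.Walk.cons h (r1.append d)).length _ v _ rfl
          have l1 : r1.length + (SimpleGraph.Walk.cons h2 r3).length = q.length := by
            rw [← hspec]; rw [SimpleGraph.Walk.length_append]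
          have l3 : t.length + d.length = r3.length := by
            rw [← hspec3]; rw [SimpleGraph.Walk.length_append]
          simp only [SimpleGraph.Walk.length_cons,
            SimpleGraph.Walk.length_append] at *
          omega
        have hsum : bcnt B (SimpleGraph.Walk.cons h q) =
            bcnt B (SimpleGraph.Walk.cons h2 t) +
            bcnt B (SimpleGraph.Walk.cons h (r1.append d)) := by
          conv_lhs => rw [bcnt_cons, ← hspec, bcnt_append, bcnt_cons,
            ← hspec3, bcnt_append]
          rw [bcnt_cons, bcnt_cons, bcnt_append]
          ring
        rw [hsum]
        exact hloop.add hrest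

end aux

/-- If every cycle of a connected finite simple graph `G` contains an even
number of edges from `B`, and every 3-clique of `G` contains at least one edge of `B`,
then `G` admits a 2-coloring with no monochromatic triangle. -/
theorem stmt_4 {V : Type*} [Fintype V] [DecidableEq V] (G : SimpleGraph V)
    (hG : G.Connected) (B : Finset (Sym2 V)) (hB : ∀ e ∈ B, e ∈ G.edgeSet)
    (hcyc : ∀ (v : V) (w : G.Walk v v), w.IsCycle →
      Even (w.edges.countP (fun e => decide (e ∈ B))))
    (htri : ∀ x y z : V, G.Adj x y → G.Adj x z → G.Adj y z →
      s(x, y) ∈ B ∨ s(x, z) ∈ B ∨ s(y, z) ∈ B) :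
    ∃ c : V → ZMod 2,
      ¬ ∃ x y z : V, G.Adj x y ∧ G.Adj x z ∧ G.Adj y z ∧ c x = c y ∧ c y = c z := by
  classical
  obtain ⟨r⟩ := hG.nonempty
  -- choose a walk from r to each vertex
  have hwalk : ∀ v : V, Nonempty (G.Walk r v) := fun v => (hG.preconnected r v)
  set p : ∀ v : V, G.Walk r v := fun v => (hwalk v).some with hp
  set c : V → ZMod 2 := fun v => ((bcnt B (p v) : ℕ) : ZMod 2) with hc
  -- key: adjacent vertices joined by a B-edge get different colors
  have key : ∀ u v : V, G.Adj u v → s(u, v) ∈ B → c u ≠ c v := by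
    intro u v huv hmem
    have hclosed : Even (bcnt B ((p u).append ((SimpleGraph.Walk.cons huv
        SimpleGraph.Walk.nil).append (p v).reverse))) :=
      even_bcnt_closed B hcyc _ r _ rfl
    rw [bcnt_append, bcnt_append, bcnt_cons, bcnt_nil, bcnt_reverse] at hclosed
    simp only [hmem, if_pos] at hclosed
    intro hcc
    rw [hc] at hcc
    simp only at hcc
    -- bcnt (p u) ≡ bcnt (p v) [mod 2] from hcc, but their sum + 1 is even
    have hpar : bcnt B (p u) % 2 = bcnt B (p v) % 2 := by
      have := (ZMod.natCast_eq_natCast_iff _ _ _).mp hcc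
      exact this
    rcases hclosed with ⟨k, hk⟩
    omega
  refine ⟨c, ?_⟩
  rintro ⟨x, y, z, hxy, hxz, hyz, hcxy, hcyz⟩
  rcases htri x y z hxy hxz hyz with hb | hb | hb
  · exact key x y hxy hb hcxy
  · exact key x z hxz hb (hcxy.trans hcyz)
  · exact key y z hyz hb hcyz
end

section
/- Let G be a finite simple graph on vertex set V with an edge e = {u,v}. Define the simple graph G⁺ on the vertex set V ⊕ Bool (V together with two new vertices u⁺ = inr false and v⁺ = inr true) whose edges are: all edges of G except e (between the corresponding inl-vertices), together with the two pendant edges {inl u, inr false} and {inl v, inr true}. Then G has a perfect matching containing the edge e if and only if G⁺ has a perfect matching. -/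
/-- A set `M` of edges of `G` is a matching if every vertex is incident to at most one
edge of `M`. -/
def IsMatchingES {V : Type*} (G : SimpleGraph V) (M : Set (Sym2 V)) : Prop :=
  M ⊆ G.edgeSet ∧ ∀ v : V, ∀ e ∈ M, ∀ f ∈ M, v ∈ e → v ∈ f → e = f

/-- A matching `M` of `G` is perfect if every vertex is incident to some edge of `M`. -/
def IsPerfectMatchingES {V : Type*} (G : SimpleGraph V) (M : Set (Sym2 V)) : Prop :=
  IsMatchingES G M ∧ ∀ v : V, ∃ e ∈ M, v ∈ e

/-- The pendant-augmented graph `G⁺` on `V ⊕ Bool`: take `G`, remove the edge `{u,v}`,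
and attach a pendant vertex `inr false` to `u` and a pendant vertex `inr true` to `v`. -/
def Gplus {V : Type*} (G : SimpleGraph V) (u v : V) : SimpleGraph (V ⊕ Bool) where
  Adj a b :=
    (∃ x y : V, a = Sum.inl x ∧ b = Sum.inl y ∧ G.Adj x y ∧ s(x, y) ≠ s(u, v)) ∨
    ((a = Sum.inl u ∧ b = Sum.inr false) ∨ (a = Sum.inr false ∧ b = Sum.inl u)) ∨
    ((a = Sum.inl v ∧ b = Sum.inr true) ∨ (a = Sum.inr true ∧ b = Sum.inl v))
  symm := by
    constructor
    rintro a b (⟨x, y, rfl, rfl, hxy, hne⟩ | h | h)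
    · exact Or.inl ⟨y, x, rfl, rfl, hxy.symm, by rwa [Sym2.eq_swap]⟩
    · exact Or.inr (Or.inl (by tauto))
    · exact Or.inr (Or.inr (by tauto))
  loopless := by
    constructor
    rintro a (⟨x, y, rfl, h, hxy, _⟩ | (⟨h1, h2⟩ | ⟨h1, h2⟩) | (⟨h1, h2⟩ | ⟨h1, h2⟩)) <;>
      simp_all

/-- `G` has a perfect matching containing the edge `e = {u,v}` if and
only if the pendant-augmented graph `G⁺` has a perfect matching. -/
theorem stmt_8 {V : Type*} [Fintype V] [DecidableEq V] (G : SimpleGraph V)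
    (u v : V) (huv : G.Adj u v) :
    (∃ M : Set (Sym2 V), IsPerfectMatchingES G M ∧ s(u, v) ∈ M) ↔
      (∃ Mplus : Set (Sym2 (V ⊕ Bool)), IsPerfectMatchingES (Gplus G u v) Mplus) := by
  have hne : u ≠ v := G.ne_of_adj huv
  constructor
  · rintro ⟨M, ⟨⟨hsub, hmat⟩, hperf⟩, heM⟩
    refine ⟨(Sym2.map Sum.inl '' (M \ {s(u,v)})) ∪
      {s(Sum.inl u, Sum.inr false), s(Sum.inl v, Sum.inr true)}, ⟨?_, ?_⟩, ?_⟩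
    · rintro e (⟨f, ⟨hfM, hfne⟩, rfl⟩ | (rfl | rfl))
      · induction f using Sym2.ind with
        | _ x y =>
          rw [Sym2.map_pair_eq, SimpleGraph.mem_edgeSet]
          exact Or.inl ⟨x, y, rfl, rfl, hsub hfM, hfne⟩
      · exact Or.inr (Or.inl (Or.inl ⟨rfl, rfl⟩))
      · exact Or.inr (Or.inr (Or.inl ⟨rfl, rfl⟩))
    · intro w e he f hf hwe hwf
      simp only [Set.mem_union, Set.mem_image, Set.mem_insert_iff,
        Set.mem_singleton_iff, Set.mem_diff] at he hf
      rcases he with ⟨e', ⟨heM', hene⟩, rfl⟩ | (rfl | rfl) <;>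
        rcases hf with ⟨f', ⟨hfM', hfne⟩, rfl⟩ | (rfl | rfl)
      · -- both images
        obtain ⟨a, hae, rfl⟩ := Sym2.mem_map.1 hwe
        obtain ⟨b, hbf, hb⟩ := Sym2.mem_map.1 hwf
        have hba : b = a := Sum.inl_injective hb
        rw [hmat a e' heM' f' hfM' hae (hba ▸ hbf)]
      · -- image vs pendant u
        obtain ⟨a, hae, rfl⟩ := Sym2.mem_map.1 hwe
        rw [Sym2.mem_iff] at hwf
        rcases hwf with h | h
        · have hau : a = u := Sum.inl_injective h
          exact absurd (hmat u e' heM' s(u,v) heM (hau ▸ hae)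
            (Sym2.mem_mk_left _ _)) hene
        · exact absurd h (by simp)
      · -- image vs pendant v
        obtain ⟨a, hae, rfl⟩ := Sym2.mem_map.1 hwe
        rw [Sym2.mem_iff] at hwf
        rcases hwf with h | h
        · have hav : a = v := Sum.inl_injective h
          exact absurd (hmat v e' heM' s(u,v) heM (hav ▸ hae)
            (Sym2.mem_mk_right _ _)) hene
        · exact absurd h (by simp)
      · -- pendant u vs image
        obtain ⟨b, hbf, hb⟩ := Sym2.mem_map.1 hwf
        rw [Sym2.mem_iff] at hwe
        rcases hwe with h | h
        · have hbu : b = u := Sum.inl_injective (hb.trans h)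
          exact absurd (hmat u f' hfM' s(u,v) heM (hbu ▸ hbf)
            (Sym2.mem_mk_left _ _)) hfne
        · exact absurd (hb.trans h) (by simp)
      · rfl
      · -- pendant u vs pendant v
        rw [Sym2.mem_iff] at hwe hwf
        rcases hwe with h | h <;> rcases hwf with h' | h' <;> simp_all
      · -- pendant v vs image
        obtain ⟨b, hbf, hb⟩ := Sym2.mem_map.1 hwf
        rw [Sym2.mem_iff] at hwe
        rcases hwe with h | h
        · have hbv : b = v := Sum.inl_injective (hb.trans h)
          exact absurd (hmat v f' hfM' s(u,v) heM (hbv ▸ hbf)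
            (Sym2.mem_mk_right _ _)) hfne
        · exact absurd (hb.trans h) (by simp)
      · rw [Sym2.mem_iff] at hwe hwf
        rcases hwe with h | h <;> rcases hwf with h' | h' <;> simp_all
      · rfl
    · -- perfect
      rintro (x | b)
      · obtain ⟨f, hfM, hxf⟩ := hperf x
        by_cases hf : f = s(u, v)
        · subst hf
          rw [Sym2.mem_iff] at hxf
          rcases hxf with rfl | rfl
          · exact ⟨s(Sum.inl x, Sum.inr false), Or.inr (Or.inl rfl), Sym2.mem_mk_left _ _⟩
          · exact ⟨s(Sum.inl x, Sum.inr true), Or.inr (Or.inr rfl), Sym2.mem_mk_left _ _⟩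
        · exact ⟨Sym2.map Sum.inl f, Or.inl ⟨f, ⟨hfM, hf⟩, rfl⟩,
            Sym2.mem_map.2 ⟨x, hxf, rfl⟩⟩
      · cases b
        · exact ⟨s(Sum.inl u, Sum.inr false), Or.inr (Or.inl rfl), Sym2.mem_mk_right _ _⟩
        · exact ⟨s(Sum.inl v, Sum.inr true), Or.inr (Or.inr rfl), Sym2.mem_mk_right _ _⟩
  · rintro ⟨Mp, ⟨⟨hsub, hmat⟩, hperf⟩⟩
    have hpu : s(Sum.inl u, Sum.inr false) ∈ Mp := by
      obtain ⟨e, heMp, hmem⟩ := hperf (Sum.inr false)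
      have hadj := hsub heMp
      induction e using Sym2.ind with
      | _ a b =>
        rw [SimpleGraph.mem_edgeSet] at hadj
        rw [Sym2.mem_iff] at hmem
        rcases hadj with ⟨x, y, rfl, rfl, _, _⟩ | (⟨rfl, rfl⟩ | ⟨rfl, rfl⟩) |
          (⟨rfl, rfl⟩ | ⟨rfl, rfl⟩)
        · simp at hmem
        · exact heMp
        · rwa [Sym2.eq_swap] at heMp
        · simp at hmem
        · simp at hmem
    have hpv : s(Sum.inl v, Sum.inr true) ∈ Mp := by
      obtain ⟨e, heMp, hmem⟩ := hperf (Sum.inr true)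
      have hadj := hsub heMp
      induction e using Sym2.ind with
      | _ a b =>
        rw [SimpleGraph.mem_edgeSet] at hadj
        rw [Sym2.mem_iff] at hmem
        rcases hadj with ⟨x, y, rfl, rfl, _, _⟩ | (⟨rfl, rfl⟩ | ⟨rfl, rfl⟩) |
          (⟨rfl, rfl⟩ | ⟨rfl, rfl⟩)
        · simp at hmem
        · simp at hmem
        · simp at hmem
        · exact heMp
        · rwa [Sym2.eq_swap] at heMp
    have hnu : ∀ f ∈ Mp, Sum.inl u ∈ f → f = s(Sum.inl u, Sum.inr false) := fun f hf hm =>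
      hmat (Sum.inl u) f hf _ hpu hm (Sym2.mem_mk_left _ _)
    have hnv : ∀ f ∈ Mp, Sum.inl v ∈ f → f = s(Sum.inl v, Sum.inr true) := fun f hf hm =>
      hmat (Sum.inl v) f hf _ hpv hm (Sym2.mem_mk_left _ _)
    refine ⟨insert s(u, v) {f : Sym2 V | Sym2.map Sum.inl f ∈ Mp}, ⟨⟨?_, ?_⟩, ?_⟩, ?_⟩
    · intro f hfmem
      rw [Set.mem_insert_iff] at hfmem
      rcases hfmem with rfl | hf
      · exact huv
      · have hadj := hsub hf
        induction f using Sym2.ind with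
        | _ x y =>
          rw [Sym2.map_pair_eq, SimpleGraph.mem_edgeSet] at hadj
          rcases hadj with ⟨a, b, ha, hb, hab, _⟩ | (⟨_, h⟩ | ⟨h, _⟩) | (⟨_, h⟩ | ⟨h, _⟩)
          · have h1 : x = a := Sum.inl_injective ha
            have h2 : y = b := Sum.inl_injective hb
            rw [SimpleGraph.mem_edgeSet]
            rw [h1, h2]
            exact hab
          all_goals exact absurd h (by simp)
    · intro w e he f hf hwe hwf
      rw [Set.mem_insert_iff] at he hf
      rcases he with rfl | he <;> rcases hf with rfl | hf
      · rfl
      · exfalso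
        rw [Sym2.mem_iff] at hwe
        rcases hwe with rfl | rfl
        · have h1 := hnu _ hf (Sym2.mem_map.2 ⟨w, hwf, rfl⟩)
          have h2 : (Sum.inr false : V ⊕ Bool) ∈ Sym2.map Sum.inl f := by
            rw [h1]; exact Sym2.mem_mk_right _ _
          obtain ⟨a, _, ha⟩ := Sym2.mem_map.1 h2
          exact absurd ha (by simp)
        · have h1 := hnv _ hf (Sym2.mem_map.2 ⟨w, hwf, rfl⟩)
          have h2 : (Sum.inr true : V ⊕ Bool) ∈ Sym2.map Sum.inl f := by
            rw [h1]; exact Sym2.mem_mk_right _ _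
          obtain ⟨a, _, ha⟩ := Sym2.mem_map.1 h2
          exact absurd ha (by simp)
      · exfalso
        rw [Sym2.mem_iff] at hwf
        rcases hwf with rfl | rfl
        · have h1 := hnu _ he (Sym2.mem_map.2 ⟨w, hwe, rfl⟩)
          have h2 : (Sum.inr false : V ⊕ Bool) ∈ Sym2.map Sum.inl e := by
            rw [h1]; exact Sym2.mem_mk_right _ _
          obtain ⟨a, _, ha⟩ := Sym2.mem_map.1 h2
          exact absurd ha (by simp)
        · have h1 := hnv _ he (Sym2.mem_map.2 ⟨w, hwe, rfl⟩)
          have h2 : (Sum.inr true : V ⊕ Bool) ∈ Sym2.map Sum.inl e := by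
            rw [h1]; exact Sym2.mem_mk_right _ _
          obtain ⟨a, _, ha⟩ := Sym2.mem_map.1 h2
          exact absurd ha (by simp)
      · have h := hmat (Sum.inl w) _ he _ hf (Sym2.mem_map.2 ⟨w, hwe, rfl⟩)
          (Sym2.mem_map.2 ⟨w, hwf, rfl⟩)
        exact Sym2.map.injective Sum.inl_injective h
    · intro w
      obtain ⟨e, heMp, hmem⟩ := hperf (Sum.inl w)
      have hadj := hsub heMp
      induction e using Sym2.ind with
      | _ a b =>
        rw [SimpleGraph.mem_edgeSet] at hadj
        rcases hadj with ⟨x, y, rfl, rfl, _, _⟩ | (⟨rfl, rfl⟩ | ⟨rfl, rfl⟩) |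
          (⟨rfl, rfl⟩ | ⟨rfl, rfl⟩)
        · refine ⟨s(x, y), Set.mem_insert_iff.2 (Or.inr
            (by rw [Set.mem_setOf_eq, Sym2.map_pair_eq]; exact heMp)), ?_⟩
          rw [Sym2.mem_iff] at hmem ⊢
          rcases hmem with h | h
          · exact Or.inl (Sum.inl_injective h)
          · exact Or.inr (Sum.inl_injective h)
        · rw [Sym2.mem_iff] at hmem
          rcases hmem with h | h
          · have : w = u := Sum.inl_injective h
            exact ⟨s(u, v), Set.mem_insert _ _, this ▸ Sym2.mem_mk_left _ _⟩
          · exact absurd h (by simp)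
        · rw [Sym2.mem_iff] at hmem
          rcases hmem with h | h
          · exact absurd h (by simp)
          · have : w = u := Sum.inl_injective h
            exact ⟨s(u, v), Set.mem_insert _ _, this ▸ Sym2.mem_mk_left _ _⟩
        · rw [Sym2.mem_iff] at hmem
          rcases hmem with h | h
          · have : w = v := Sum.inl_injective h
            exact ⟨s(u, v), Set.mem_insert _ _, this ▸ Sym2.mem_mk_right _ _⟩
          · exact absurd h (by simp)
        · rw [Sym2.mem_iff] at hmem
          rcases hmem with h | h
          · exact absurd h (by simp)
          · have : w = v := Sum.inl_injective h
            exact ⟨s(u, v), Set.mem_insert _ _, this ▸ Sym2.mem_mk_right _ _⟩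
    · exact Set.mem_insert _ _
end
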